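/- arXiv:2405.06231 — 5 statements merged into one kernel-verified Lean document; each statement's English description precedes it below -/
import Mathlib

section
/- The binary entropy difference function f(α,p) = h((1-α)p) - h(αp), where h is the binary entropy function, is monotonically decreasing in p on [1/2, 1] for any fixed 0 ≤ α ≤ 1/2; consequently its maximum over p ∈ [0,1] is attained at some p̃ ≤ 1/2. -/
open Real Set

/-- Binary entropy function `h(x) = -x log₂ x - (1-x) log₂ (1-x)`. -/
noncomputable def binEnt (x : ℝ) : ℝ :=
  -(x * Real.logb 2 x) - (1 - x) * Real.logb 2 (1 - x)

-- constants lemmas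
lemma log3_le : Real.log 3 ≤ 4/3 := by
  rw [Real.log_le_iff_le_exp (by norm_num)]
  have h : Real.exp (4/3) = Real.exp (1/3) ^ (4:ℕ) := by
    rw [← Real.exp_nat_mul]; norm_num
  have h2 : (1:ℝ)/3 + 1 ≤ Real.exp (1/3) := Real.add_one_le_exp _
  have h3 : (0:ℝ) < Real.exp (1/3) := Real.exp_pos _
  rw [h]
  calc (3:ℝ) ≤ (4/3)^(4:ℕ) := by norm_num
    _ ≤ Real.exp (1/3) ^ (4:ℕ) := by gcongr; · norm_num; · linarith

lemma two_le_log8 : (2:ℝ) ≤ Real.log 8 := by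
  rw [Real.le_log_iff_exp_le (by norm_num)]
  have h : Real.exp 2 = Real.exp 1 ^ (2:ℕ) := by rw [← Real.exp_nat_mul]; norm_num
  have := Real.exp_one_lt_d9
  rw [h]; nlinarith [Real.exp_pos 1]

lemma log5_le : Real.log 5 ≤ 1.6148 := by
  have h625 : Real.log 625 = 4 * Real.log 5 := by
    rw [show (625:ℝ) = 5^(4:ℕ) by norm_num, Real.log_pow]; push_cast; ring
  have hsplit : Real.log 625 = 9 * Real.log 2 + Real.log (625/512) := by
    rw [show (625:ℝ)/512 = 625 * (512)⁻¹ by ring, Real.log_mul (by norm_num) (by norm_num),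
      Real.log_inv, show (512:ℝ) = 2^(9:ℕ) by norm_num, Real.log_pow]
    push_cast; ring
  have hb : Real.log (625/512) ≤ 625/512 - 1 := Real.log_le_sub_one_of_pos (by norm_num)
  have := Real.log_two_lt_d9
  nlinarith

noncomputable def Gf (t : ℝ) : ℝ := t * (Real.log (1-t) - Real.log t)

lemma hasDerivAt_Gf {t : ℝ} (h0 : 0 < t) (h1 : t < 1) :
    HasDerivAt Gf (Real.log (1-t) - Real.log t - t/(1-t) - 1) t := by
  have h1' : (0:ℝ) < 1 - t := by linarith
  have hlog1 : HasDerivAt (fun t : ℝ => Real.log (1 - t)) (-(1-t)⁻¹) t := by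
    have hin : HasDerivAt (fun t : ℝ => 1 - t) (-1) t := by exact (hasDerivAt_id' t).const_sub (1:ℝ)
    have := (Real.hasDerivAt_log h1'.ne').comp t hin
    refine this.congr_deriv ?_; ring
  have hlog2 : HasDerivAt Real.log t⁻¹ t := Real.hasDerivAt_log h0.ne'
  have := (hasDerivAt_id t).mul (hlog1.sub hlog2)
  refine this.congr_deriv ?_
  simp only [Pi.sub_apply, id]
  field_simp
  ring

lemma Gf_deriv_nonpos {t : ℝ} (h0 : 1/4 ≤ t) (h1 : t < 1) :
    Real.log (1-t) - Real.log t - t/(1-t) - 1 ≤ 0 := by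
  have ht : (0:ℝ) < t := by linarith
  have h1' : (0:ℝ) < 1 - t := by linarith
  have hd : Real.log (1-t) - Real.log t = Real.log ((1-t)/t) := (Real.log_div h1'.ne' ht.ne').symm
  have hle : (1-t)/t ≤ 3 := by rw [div_le_iff₀ ht]; linarith
  have hl : Real.log ((1-t)/t) ≤ Real.log 3 := Real.log_le_log (by positivity) hle
  have h3 : Real.log 3 ≤ 4/3 := log3_le
  have htt : 1/3 ≤ t/(1-t) := by rw [le_div_iff₀ h1']; linarith
  linarith [hd ▸ hl]

lemma Gf_anti {a b : ℝ} (ha : 1/4 ≤ a) (hab : a ≤ b) (hb : b < 1) : Gf b ≤ Gf a := by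
  have hanti : AntitoneOn Gf (Icc a b) := by
    apply antitoneOn_of_deriv_nonpos (convex_Icc a b)
    · intro t ht
      exact (hasDerivAt_Gf (by linarith [ht.1] : (0:ℝ) < t) (by linarith [ht.2])).continuousAt.continuousWithinAt
    · intro t ht
      rw [interior_Icc] at ht
      exact (hasDerivAt_Gf (by linarith [ht.1]) (by linarith [ht.2])).differentiableAt.differentiableWithinAt
    · intro t ht
      rw [interior_Icc] at ht
      rw [(hasDerivAt_Gf (by linarith [ht.1]) (by linarith [ht.2])).deriv]
      exact Gf_deriv_nonpos (by linarith [ht.1]) (by linarith [ht.2])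
  exact hanti (left_mem_Icc.2 hab) (right_mem_Icc.2 hab) hab

-- crude part: 0 < x ≤ 1/9
lemma L2a {x : ℝ} (hx0 : 0 < x) (hx : x ≤ 1/9) : Gf (1/2 - x) ≤ Gf x := by
  have h1 : (0:ℝ) < 1/2 - x := by linarith
  have h2 : (0:ℝ) < 1/2 + x := by linarith
  have h1x : (0:ℝ) < 1 - x := by linarith
  have hA : Gf (1/2 - x) ≤ 2*x := by
    have heq : Real.log (1 - (1/2 - x)) - Real.log (1/2 - x) = Real.log ((1/2+x)/(1/2-x)) := by
      rw [Real.log_div h2.ne' h1.ne']; ring_nf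
    unfold Gf
    rw [heq]
    have hu : Real.log ((1/2+x)/(1/2-x)) ≤ (1/2+x)/(1/2-x) - 1 :=
      Real.log_le_sub_one_of_pos (by positivity)
    have h3 : (1/2+x)/(1/2-x) * (1/2-x) = 1/2+x := div_mul_cancel₀ _ h1.ne'
    nlinarith
  have hB : 2*x ≤ Gf x := by
    have hd : Real.log (1-x) - Real.log x = Real.log ((1-x)/x) := (Real.log_div h1x.ne' hx0.ne').symm
    have h8 : (8:ℝ) ≤ (1-x)/x := by rw [le_div_iff₀ hx0]; linarith
    have hl : (2:ℝ) ≤ Real.log ((1-x)/x) := le_trans two_le_log8 (Real.log_le_log (by norm_num) h8)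
    unfold Gf
    rw [hd]
    nlinarith
  linarith

-- fine part derivative sign
lemma Dderiv_nonpos {x : ℝ} (h1 : 1/9 ≤ x) (h2 : x ≤ 1/4) :
    (Real.log (1-x) - Real.log x - x/(1-x) - 1) +
    (Real.log (1-(1/2-x)) - Real.log (1/2-x) - (1/2-x)/(1-(1/2-x)) - 1) ≤ 0 := by
  have hx0 : (0:ℝ) < x := by linarith
  have hx1 : (0:ℝ) < 1 - x := by linarith
  have hm : (0:ℝ) < 1/2 - x := by linarith
  have hp : (0:ℝ) < 1/2 + x := by linarith
  have e1 : (1:ℝ) - (1/2 - x) = 1/2 + x := by ring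
  rw [e1]
  have hu : Real.log (1-x) - Real.log x = Real.log ((1-x)/x) := (Real.log_div hx1.ne' hx0.ne').symm
  have hv : Real.log (1/2+x) - Real.log (1/2-x) = Real.log ((1/2+x)/(1/2-x)) :=
    (Real.log_div hp.ne' hm.ne').symm
  rw [hu, hv]
  -- tangent (log) bounds
  have hub : Real.log ((1-x)/x) ≤ 1.6148 + ((1-x)/x - 5)/5 := by
    have heq : Real.log ((1-x)/x) = Real.log 5 + Real.log ((1-x)/x/5) := by
      rw [← Real.log_mul (by norm_num) (by positivity)]
      congr 1
      ring
    rw [heq]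
    have hb := Real.log_le_sub_one_of_pos (show (0:ℝ) < (1-x)/x/5 by positivity)
    have h5 := log5_le
    have he : (1-x)/x/5 - 1 = ((1-x)/x - 5)/5 := by ring
    linarith
  have hvb : Real.log ((1/2+x)/(1/2-x)) ≤ 0.6931471808 + ((1/2+x)/(1/2-x) - 2)/2 := by
    have heq : Real.log ((1/2+x)/(1/2-x)) = Real.log 2 + Real.log ((1/2+x)/(1/2-x)/2) := by
      rw [← Real.log_mul (by norm_num) (by positivity)]
      congr 1
      ring
    rw [heq]
    have h2' := Real.log_two_lt_d9.le
    have hb := Real.log_le_sub_one_of_pos (show (0:ℝ) < (1/2+x)/(1/2-x)/2 by positivity)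
    have he : (1/2+x)/(1/2-x)/2 - 1 = ((1/2+x)/(1/2-x) - 2)/2 := by ring
    linarith
  -- secant upper bounds for the positive fractions
  have hu2 : (1-x)/x ≤ 12 - 36*x := by
    rw [div_le_iff₀ hx0]; nlinarith
  have hv2 : (1/2+x)/(1/2-x) ≤ (3 + 72*x)/7 := by
    rw [div_le_iff₀ hm]; nlinarith
  -- tangent lower bounds for the subtracted fractions
  have ht1 : 9/41 + (2500/1681)*(x - 9/50) ≤ x/(1-x) := by
    rw [le_div_iff₀ hx1]; nlinarith [sq_nonneg (x - 9/50)]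
  have ht2 : 8/17 - (625/289)*(x - 9/50) ≤ (1/2-x)/(1/2+x) := by
    rw [le_div_iff₀ hp]; nlinarith [sq_nonneg (x - 9/50)]
  linarith

-- D antitone consequence
lemma L2b {x : ℝ} (h1 : 1/9 ≤ x) (h2 : x ≤ 1/4) : Gf (1/2 - x) ≤ Gf x := by
  set D : ℝ → ℝ := fun y => Gf y - Gf (1/2 - y) with hD
  have hanti : AntitoneOn D (Set.Icc (1/9 : ℝ) (1/4)) := by
    apply antitoneOn_of_deriv_nonpos (convex_Icc _ _)
    · intro t ht
      have h0 : (0:ℝ) < t := by linarith [ht.1]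
      have hlt : t < 1 := by linarith [ht.2]
      have hm0 : (0:ℝ) < 1/2 - t := by linarith [ht.2]
      have hm1 : 1/2 - t < 1 := by linarith [ht.1]
      have hcomp := (hasDerivAt_Gf hm0 hm1).comp t
        (by exact (hasDerivAt_id' t).const_sub (1/2:ℝ) :
          HasDerivAt (fun y : ℝ => 1/2 - y) (-1) t)
      exact ((hasDerivAt_Gf h0 hlt).sub hcomp).continuousAt.continuousWithinAt
    · intro t ht
      rw [interior_Icc] at ht
      have h0 : (0:ℝ) < t := by linarith [ht.1]
      have hlt : t < 1 := by linarith [ht.2]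
      have hm0 : (0:ℝ) < 1/2 - t := by linarith [ht.2]
      have hm1 : 1/2 - t < 1 := by linarith [ht.1]
      have hcomp := (hasDerivAt_Gf hm0 hm1).comp t
        (by exact (hasDerivAt_id' t).const_sub (1/2:ℝ) :
          HasDerivAt (fun y : ℝ => 1/2 - y) (-1) t)
      exact ((hasDerivAt_Gf h0 hlt).sub hcomp).differentiableAt.differentiableWithinAt
    · intro t ht
      rw [interior_Icc] at ht
      have h0 : (0:ℝ) < t := by linarith [ht.1]
      have hlt : t < 1 := by linarith [ht.2]
      have hm0 : (0:ℝ) < 1/2 - t := by linarith [ht.2]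
      have hm1 : 1/2 - t < 1 := by linarith [ht.1]
      have hder : HasDerivAt D ((Real.log (1-t) - Real.log t - t/(1-t) - 1) +
          (Real.log (1-(1/2-t)) - Real.log (1/2-t) - (1/2-t)/(1-(1/2-t)) - 1)) t := by
        have hcomp := (hasDerivAt_Gf hm0 hm1).comp t
          (by exact (hasDerivAt_id' t).const_sub (1/2:ℝ) :
            HasDerivAt (fun y : ℝ => 1/2 - y) (-1) t)
        have := (hasDerivAt_Gf h0 hlt).sub hcomp
        refine this.congr_deriv ?_
        ring
      rw [hder.deriv]
      exact Dderiv_nonpos ht.1.le ht.2.le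
  have h14 : D x ≥ D (1/4) := hanti (Set.mem_Icc.2 ⟨h1, h2⟩) (Set.mem_Icc.2 ⟨by norm_num, le_refl _⟩) h2
  have hD4 : D (1/4) = 0 := by simp [hD]; norm_num
  have := h14
  rw [hD4] at this
  simpa [hD] using this

-- master comparison lemma
lemma G_compare {x y : ℝ} (hx0 : 0 ≤ x) (hxy : x ≤ y) (hsum : 1/2 ≤ x + y)
    (hsum1 : x + y ≤ 1) (hy1 : y < 1) : Gf y ≤ Gf x := by
  rcases eq_or_lt_of_le hx0 with h | hx0'
  · -- x = 0
    have hy : 1/2 ≤ y := by linarith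
    have hy0 : (0:ℝ) < y := by linarith
    have hG0 : Gf x = 0 := by rw [← h]; simp [Gf]
    rw [hG0]
    have : Real.log (1 - y) ≤ Real.log y := Real.log_le_log (by linarith) (by linarith)
    unfold Gf
    nlinarith
  · rcases le_or_gt (1/4 : ℝ) x with h14 | h14
    · exact Gf_anti h14 hxy hy1
    · have hy14 : 1/2 - x ≤ y := by linarith
      have h1 : Gf y ≤ Gf (1/2 - x) := Gf_anti (by linarith) hy14 hy1
      have h2 : Gf (1/2 - x) ≤ Gf x := by
        rcases le_or_gt x (1/9 : ℝ) with h | h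
        · exact L2a hx0' h
        · exact L2b h.le (by linarith)
      linarith
noncomputable def Ef (z : ℝ) : ℝ := -(z * Real.log z) - (1-z) * Real.log (1-z)

lemma binEnt_eq (z : ℝ) : binEnt z = Ef z / Real.log 2 := by
  unfold binEnt Ef Real.logb
  ring

lemma hasDerivAt_Ef {z : ℝ} (h0 : 0 < z) (h1 : z < 1) :
    HasDerivAt Ef (Real.log (1-z) - Real.log z) z := by
  have h1' : (0:ℝ) < 1 - z := by linarith
  have ha : HasDerivAt (fun z : ℝ => z * Real.log z) (Real.log z + 1) z :=
    Real.hasDerivAt_mul_log h0.ne'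
  have hb : HasDerivAt (fun z : ℝ => (1-z) * Real.log (1-z)) ((Real.log (1-z) + 1) * (-1)) z := by
    exact (Real.hasDerivAt_mul_log h1'.ne').comp z
      (by exact (hasDerivAt_id' z).const_sub (1:ℝ) :
        HasDerivAt (fun y : ℝ => 1 - y) (-1) z)
  have := ha.neg.sub hb
  refine this.congr_deriv ?_
  ring

lemma hasDerivAt_Efc {c p : ℝ} (hc : 0 ≤ c) (hp : 0 < p) (h1 : c * p < 1) :
    HasDerivAt (fun q => Ef (c*q)) (c * (Real.log (1 - c*p) - Real.log (c*p))) p := by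
  rcases eq_or_lt_of_le hc with h | h
  · have he : (fun q : ℝ => Ef (c*q)) = fun _ => (0:ℝ) := by
      funext q
      rw [← h]
      simp [Ef]
    rw [he, ← h]
    simpa using hasDerivAt_const p (0:ℝ)
  · have hcp : 0 < c * p := mul_pos h hp
    have := (hasDerivAt_Ef hcp h1).comp p ((hasDerivAt_id p).const_mul c)
    refine this.congr_deriv ?_
    ring

lemma continuous_binEnt : Continuous binEnt := by
  have hrw : binEnt = fun x => (-(x * Real.log x) - ((1-x) * Real.log (1-x))) * (Real.log 2)⁻¹ := by
    funext x
    unfold binEnt Real.logb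
    ring
  rw [hrw]
  exact (((Real.continuous_mul_log).neg.sub
    ((Real.continuous_mul_log).comp (continuous_const.sub continuous_id))).mul continuous_const)

theorem entropy_diff_antitone_and_max_le_half (α : ℝ)
    (hα : α ∈ Set.Icc (0 : ℝ) (1/2)) :
    AntitoneOn (fun p : ℝ => binEnt ((1 - α) * p) - binEnt (α * p))
      (Set.Icc (1/2 : ℝ) 1) ∧
    ∃ pt ∈ Set.Icc (0 : ℝ) (1/2), ∀ p ∈ Set.Icc (0 : ℝ) 1,
      binEnt ((1 - α) * p) - binEnt (α * p) ≤
        binEnt ((1 - α) * pt) - binEnt (α * pt) := by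
  obtain ⟨hα0, hα2⟩ := hα
  set f : ℝ → ℝ := fun p => binEnt ((1 - α) * p) - binEnt (α * p) with hf
  have hcontf : Continuous f :=
    (continuous_binEnt.comp (continuous_const.mul continuous_id)).sub
      (continuous_binEnt.comp (continuous_const.mul continuous_id))
  have hfeq : f = fun p => (Ef ((1-α)*p) - Ef (α*p)) * (Real.log 2)⁻¹ := by
    funext p
    rw [hf]
    simp only [binEnt_eq]
    ring
  have hlog2 : (0:ℝ) < Real.log 2 := Real.log_pos (by norm_num)
  have hant : AntitoneOn f (Set.Icc (1/2 : ℝ) 1) := by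
    apply antitoneOn_of_deriv_nonpos (convex_Icc _ _) hcontf.continuousOn
    · intro p hp
      rw [interior_Icc] at hp
      have hp0 : (0:ℝ) < p := by linarith [hp.1]
      have h1 : (1-α) * p < 1 := by nlinarith [hp.2]
      have h2 : α * p < 1 := by nlinarith [hp.2]
      rw [hfeq]
      exact (((hasDerivAt_Efc (by linarith) hp0 h1).sub
        (hasDerivAt_Efc hα0 hp0 h2)).mul_const _).differentiableAt.differentiableWithinAt
    · intro p hp
      rw [interior_Icc] at hp
      have hp0 : (0:ℝ) < p := by linarith [hp.1]
      have h1 : (1-α) * p < 1 := by nlinarith [hp.2]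
      have h2 : α * p < 1 := by nlinarith [hp.2]
      have hder := ((hasDerivAt_Efc (show (0:ℝ) ≤ 1-α by linarith) hp0 h1).sub
        (hasDerivAt_Efc hα0 hp0 h2)).mul_const (Real.log 2)⁻¹
      rw [hfeq, show deriv (fun p => (Ef ((1 - α) * p) - Ef (α * p)) * (Real.log 2)⁻¹) p = _ from hder.deriv]
      set L1 := Real.log (1 - (1-α)*p) - Real.log ((1-α)*p)
      set L2 := Real.log (1 - α*p) - Real.log (α*p)
      have hG : Gf ((1-α)*p) ≤ Gf (α*p) := by
        apply G_compare
        · positivity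
        · nlinarith
        · nlinarith [hp.1]
        · nlinarith [hp.2]
        · nlinarith [hp.2]
      have hid : p * ((1-α)*L1 - α*L2) = Gf ((1-α)*p) - Gf (α*p) := by
        simp only [Gf, L1, L2]
        ring
      have hnum : (1-α)*L1 - α*L2 ≤ 0 := by
        have hmul : p * ((1-α)*L1 - α*L2) ≤ p * 0 := by
          rw [mul_zero, hid]; linarith
        exact le_of_mul_le_mul_left hmul hp0
      have hpos : (0:ℝ) < (Real.log 2)⁻¹ := by positivity
      nlinarith [mul_nonneg (neg_nonneg.2 hnum) hpos.le]
  refine ⟨hant, ?_⟩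
  have hne : (Set.Icc (0:ℝ) (1/2)).Nonempty := ⟨0, by norm_num⟩
  obtain ⟨pt, hpt, hmax⟩ := isCompact_Icc.exists_isMaxOn hne hcontf.continuousOn
  refine ⟨pt, hpt, ?_⟩
  intro p hp
  rcases le_or_gt p (1/2) with h | h
  · exact hmax ⟨hp.1, h⟩
  · have h1 : f p ≤ f (1/2) := hant (by constructor <;> norm_num) ⟨h.le, hp.2⟩ h.le
    have h2 : f (1/2) ≤ f pt := hmax (by constructor <;> norm_num)
    exact le_trans h1 h2
end

section
/- For input ρ(ε) = diag(1-ε, ε), the complementary channel output F^c(ρ(ε)) = P₀ρ(ε)P₀† + P₁ρ(ε)P₁† has eigenvalues gε and (1-gε)/2 · (1 ± √(u²+v²)), where u = 2δ√(p(1-p)), v = 1-2p, and δ = (1 + ε(g-2))/(1 - εg). -/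
open Matrix

/-- Complementary Kraus operator `P₀ = √g|0⟩⟨1| + √(1-p)|1⟩⟨0| + √p|2⟩⟨0|`. -/
noncomputable def Pk0 (p g : ℝ) : Matrix (Fin 3) (Fin 2) ℂ :=
  !![0, (Real.sqrt g : ℂ);
     (Real.sqrt (1 - p) : ℂ), 0;
     (Real.sqrt p : ℂ), 0]

/-- Complementary Kraus operator `P₁ = √((1-g)(1-p))|1⟩⟨1| - √(p(1-g))|2⟩⟨1|`. -/
noncomputable def Pk1 (p g : ℝ) : Matrix (Fin 3) (Fin 2) ℂ :=
  !![0, 0;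
     0, (Real.sqrt ((1 - g) * (1 - p)) : ℂ);
     0, -(Real.sqrt (p * (1 - g)) : ℂ)]

/-- The complementary channel `F^c(ρ) = P₀ ρ P₀† + P₁ ρ P₁†`. -/
noncomputable def dampDephComp (p g : ℝ) (ρ : Matrix (Fin 2) (Fin 2) ℂ) :
    Matrix (Fin 3) (Fin 3) ℂ :=
  Pk0 p g * ρ * (Pk0 p g)ᴴ + Pk1 p g * ρ * (Pk1 p g)ᴴ

theorem dampDephComp_output_spectrum (p g ε u v δ : ℝ)
    (hp : p ∈ Set.Icc (0 : ℝ) (1/2)) (hg : g ∈ Set.Ico (0 : ℝ) 1)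
    (hε : ε ∈ Set.Icc (0 : ℝ) 1)
    (hδ : δ = (1 + ε * (g - 2)) / (1 - ε * g))
    (hu : u = 2 * δ * Real.sqrt (p * (1 - p)))
    (hv : v = 1 - 2 * p) :
    spectrum ℂ (dampDephComp p g !![((1 - ε : ℝ) : ℂ), 0; 0, ((ε : ℝ) : ℂ)]) =
      {((g * ε : ℝ) : ℂ),
       (((1 - g * ε) / 2 * (1 + Real.sqrt (u ^ 2 + v ^ 2)) : ℝ) : ℂ),
       (((1 - g * ε) / 2 * (1 - Real.sqrt (u ^ 2 + v ^ 2)) : ℝ) : ℂ)} := by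
  obtain ⟨hp0, hp1⟩ := hp
  obtain ⟨hg0, hg1⟩ := hg
  obtain ⟨hε0, hε1⟩ := hε
  have h1p : (0:ℝ) ≤ 1 - p := by linarith
  have h1g : (0:ℝ) ≤ 1 - g := by linarith
  have hne : (1:ℝ) - ε * g ≠ 0 := by
    have : ε * g ≤ g := by nlinarith
    have : (0:ℝ) < 1 - ε * g := by linarith
    linarith
  have sqg : Real.sqrt g * Real.sqrt g = g := Real.mul_self_sqrt hg0
  have sq1p : Real.sqrt (1-p) * Real.sqrt (1-p) = 1 - p := Real.mul_self_sqrt h1p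
  have sqp : Real.sqrt p * Real.sqrt p = p := Real.mul_self_sqrt hp0
  have sqgp : Real.sqrt ((1-g)*(1-p)) * Real.sqrt ((1-g)*(1-p)) = (1-g)*(1-p) :=
    Real.mul_self_sqrt (by positivity)
  have sqpg : Real.sqrt (p*(1-g)) * Real.sqrt (p*(1-g)) = p*(1-g) :=
    Real.mul_self_sqrt (by positivity)
  have hmix : Real.sqrt (1-p) * Real.sqrt p = Real.sqrt (p*(1-p)) := by
    rw [← Real.sqrt_mul h1p]; ring_nf
  have hmix2 : Real.sqrt ((1-g)*(1-p)) * Real.sqrt (p*(1-g)) = (1-g) * Real.sqrt (p*(1-p)) := by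
    rw [← Real.sqrt_mul (by positivity), show (1-g)*(1-p)*(p*(1-g)) = (1-g)^2 * (p*(1-p)) by ring,
      Real.sqrt_mul (by positivity), Real.sqrt_sq h1g]
  -- the matrix
  have hM : dampDephComp p g !![((1 - ε : ℝ) : ℂ), 0; 0, ((ε : ℝ) : ℂ)] =
      !![((g*ε : ℝ) : ℂ), 0, 0;
         0, (((1-p)*(1-ε*g) : ℝ) : ℂ), ((Real.sqrt (p*(1-p)) * (1-2*ε+g*ε) : ℝ) : ℂ);
         0, ((Real.sqrt (p*(1-p)) * (1-2*ε+g*ε) : ℝ) : ℂ), ((p*(1-ε*g) : ℝ) : ℂ)] := by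
    have E00 : Real.sqrt g * ε * Real.sqrt g = g * ε := by linear_combination ε * sqg
    have E11 : Real.sqrt (1-p) * (1-ε) * Real.sqrt (1-p)
        + Real.sqrt ((1-g)*(1-p)) * ε * Real.sqrt ((1-g)*(1-p)) = (1-p)*(1-ε*g) := by
      linear_combination (1-ε)*sq1p + ε*sqgp
    have E12 : Real.sqrt (1-p) * (1-ε) * Real.sqrt p
        - Real.sqrt ((1-g)*(1-p)) * ε * Real.sqrt (p*(1-g))
        = Real.sqrt (p*(1-p))*(1-2*ε+g*ε) := by
      linear_combination (1-ε)*hmix - ε*hmix2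
    have E22 : Real.sqrt p * (1-ε) * Real.sqrt p
        + Real.sqrt (p*(1-g)) * ε * Real.sqrt (p*(1-g)) = p*(1-ε*g) := by
      linear_combination (1-ε)*sqp + ε*sqpg
    ext i j
    fin_cases i <;> fin_cases j <;>
      simp [dampDephComp, Pk0, Pk1, Matrix.mul_apply, Matrix.vecMul, dotProduct,
        Fin.sum_univ_succ, Matrix.conjTranspose_apply, Complex.conj_ofReal, Matrix.vecHead,
        Matrix.vecTail] <;>
      simp only [← Complex.ofReal_ofNat, ← Complex.ofReal_one, ← Complex.ofReal_mul, ← Complex.ofReal_sub,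
        ← Complex.ofReal_add, ← Complex.ofReal_neg, Complex.ofReal_inj] <;> linarith [E00, E11, E12, E22]
  -- real eigenvalue facts
  set s := Real.sqrt (u ^ 2 + v ^ 2) with hs
  have hq : Real.sqrt (p*(1-p)) * Real.sqrt (p*(1-p)) = p*(1-p) :=
    Real.mul_self_sqrt (by positivity)
  have hs2 : s * s = u ^ 2 + v ^ 2 := Real.mul_self_sqrt (by positivity)
  have hδ' : δ * (1 - ε * g) = 1 + ε * (g - 2) := by
    rw [hδ]; field_simp
  have hsumR : (1 - g * ε) / 2 * (1 + s) + (1 - g * ε) / 2 * (1 - s)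
      = (1-p)*(1-ε*g) + p*(1-ε*g) := by ring
  have hprodR : ((1 - g * ε) / 2 * (1 + s)) * ((1 - g * ε) / 2 * (1 - s))
      = (1-p)*(1-ε*g) * (p*(1-ε*g))
        - (Real.sqrt (p*(1-p)) * (1-2*ε+g*ε)) * (Real.sqrt (p*(1-p)) * (1-2*ε+g*ε)) := by
    linear_combination (-(1-g*ε)^2/4) * hs2
      + (-(1-g*ε)^2/4*(u + 2*δ*Real.sqrt (p*(1-p)))) * hu
      + (-(1-g*ε)^2/4*(v + (1-2*p))) * hv
      + ((1-2*ε+g*ε)^2 - (1-g*ε)^2*δ^2) * hq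
      + (-(p*(1-p))*(δ*(1-ε*g) + (1-2*ε+g*ε))) * hδ'
  rw [hM]
  -- spectrum via determinant
  ext z
  rw [spectrum.mem_iff, Matrix.isUnit_iff_isUnit_det, isUnit_iff_ne_zero, not_not,
    show (algebraMap ℂ (Matrix (Fin 3) (Fin 3) ℂ) z) = Matrix.diagonal (fun _ => z) from rfl]
  have hdet : ((Matrix.diagonal fun _ : Fin 3 => z) -
      !![((g*ε : ℝ) : ℂ), 0, 0;
         0, (((1-p)*(1-ε*g) : ℝ) : ℂ), ((Real.sqrt (p*(1-p)) * (1-2*ε+g*ε) : ℝ) : ℂ);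
         0, ((Real.sqrt (p*(1-p)) * (1-2*ε+g*ε) : ℝ) : ℂ), ((p*(1-ε*g) : ℝ) : ℂ)]).det
      = (z - ((g * ε : ℝ) : ℂ)) * (z - (((1 - g * ε) / 2 * (1 + s) : ℝ) : ℂ))
        * (z - (((1 - g * ε) / 2 * (1 - s) : ℝ) : ℂ)) := by
    have hsC : ((((1 - g * ε) / 2 * (1 + s) : ℝ) : ℂ) + (((1 - g * ε) / 2 * (1 - s) : ℝ) : ℂ))
        = (((1-p)*(1-ε*g) : ℝ) : ℂ) + ((p*(1-ε*g) : ℝ) : ℂ) := by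
      exact_mod_cast congrArg (Complex.ofReal) hsumR
    have hpC : ((((1 - g * ε) / 2 * (1 + s) : ℝ) : ℂ) * (((1 - g * ε) / 2 * (1 - s) : ℝ) : ℂ))
        = (((1-p)*(1-ε*g) : ℝ) : ℂ) * ((p*(1-ε*g) : ℝ) : ℂ)
          - ((Real.sqrt (p*(1-p)) * (1-2*ε+g*ε) : ℝ) : ℂ)
            * ((Real.sqrt (p*(1-p)) * (1-2*ε+g*ε) : ℝ) : ℂ) := by
      exact_mod_cast congrArg (Complex.ofReal) hprodR
    rw [Matrix.det_fin_three]
    simp [Matrix.diagonal]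
    push_cast at hsC hpC ⊢
    linear_combination (z - (g : ℂ) * (ε : ℂ)) * (z * hsC - hpC)
  rw [hdet]
  simp only [mul_eq_zero, sub_eq_zero, Set.mem_insert_iff, Set.mem_singleton_iff]
  tauto
end

section
/- For 0 ≤ p ≤ 1/2 and g satisfying g < 1 - 1/(2(1 - 2p(1-p))), the 'log-singularity rate' of the channel output, x_d = 1-g, strictly exceeds that of the environment output, x_e = g + 4p(1-p)(1-g); conversely if g ≥ 1 - 1/(2(1-2p(1-p))) then x_d ≤ x_e. -/
theorem log_singularity_rate_comparison (p g : ℝ)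
    (hp : p ∈ Set.Icc (0 : ℝ) (1/2)) (hg : g ∈ Set.Icc (0 : ℝ) 1) :
    (g < 1 - 1 / (2 * (1 - 2 * p * (1 - p))) →
      1 - g > g + 4 * p * (1 - p) * (1 - g)) ∧
    (g ≥ 1 - 1 / (2 * (1 - 2 * p * (1 - p))) →
      1 - g ≤ g + 4 * p * (1 - p) * (1 - g)) := by
  obtain ⟨hp0, hp1⟩ := hp
  have hq : (0:ℝ) < 1 - 2 * p * (1 - p) := by nlinarith
  constructor
  · intro h
    have h2 : 1 / (2 * (1 - 2 * p * (1 - p))) < 1 - g := by linarith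
    rw [div_lt_iff₀ (by positivity)] at h2
    nlinarith
  · intro h
    have h2 : 1 - g ≤ 1 / (2 * (1 - 2 * p * (1 - p))) := by linarith
    rw [le_div_iff₀ (by positivity)] at h2
    nlinarith
end

section
/- For 1 ≥ g ≥ (1-2p)²/(1+(1-2p)²) with p ∈ [0,1/2], the quantities γ = (g - (1-2p)²(1-g))/(1 - (1-2p)²(1-g)) and δ = 1/2 - (1-2p)√(1 - (1-2p)²(1-g))/(2√g) satisfy 0 ≤ γ ≤ 1 and 0 ≤ δ ≤ 1, i.e., they define valid damping and dephasing channel parameters. -/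
theorem antidegrading_parameters_valid (p g : ℝ)
    (hp : p ∈ Set.Icc (0 : ℝ) (1/2))
    (hg1 : g ≤ 1) (hg2 : (1 - 2 * p) ^ 2 / (1 + (1 - 2 * p) ^ 2) ≤ g)
    (hg0 : 0 < g) :
    (0 ≤ (g - (1 - 2 * p) ^ 2 * (1 - g)) / (1 - (1 - 2 * p) ^ 2 * (1 - g)) ∧
      (g - (1 - 2 * p) ^ 2 * (1 - g)) / (1 - (1 - 2 * p) ^ 2 * (1 - g)) ≤ 1) ∧
    (0 ≤ 1 / 2 - (1 - 2 * p) * Real.sqrt (1 - (1 - 2 * p) ^ 2 * (1 - g)) /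
        (2 * Real.sqrt g) ∧
      1 / 2 - (1 - 2 * p) * Real.sqrt (1 - (1 - 2 * p) ^ 2 * (1 - g)) /
        (2 * Real.sqrt g) ≤ 1) := by
  obtain ⟨hp0, hp1⟩ := hp
  have hq0 : 0 ≤ 1 - 2 * p := by linarith
  have hq1 : 1 - 2 * p ≤ 1 := by linarith
  have hc0 : 0 ≤ (1 - 2 * p) ^ 2 := sq_nonneg _
  have hc1 : (1 - 2 * p) ^ 2 ≤ 1 := by nlinarith
  have hcpos : (0:ℝ) < 1 + (1 - 2 * p) ^ 2 := by nlinarith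
  have hnum : 0 ≤ g - (1 - 2 * p) ^ 2 * (1 - g) := by
    have := (div_le_iff₀ hcpos).mp hg2
    nlinarith
  have hden : 0 < 1 - (1 - 2 * p) ^ 2 * (1 - g) := by nlinarith
  have hA := hden.le
  refine ⟨⟨div_nonneg hnum hden.le, (div_le_one hden).mpr (by nlinarith)⟩, ?_, ?_⟩
  · -- δ ≥ 0 : (1-2p)√A ≤ √g
    have hsq : ((1 - 2 * p) * Real.sqrt (1 - (1 - 2 * p) ^ 2 * (1 - g))) ^ 2 ≤
        (Real.sqrt g) ^ 2 := by
      rw [mul_pow, Real.sq_sqrt hA, Real.sq_sqrt hg0.le]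
      nlinarith
    have hkey : (1 - 2 * p) * Real.sqrt (1 - (1 - 2 * p) ^ 2 * (1 - g)) ≤ Real.sqrt g := by
      have h1 : 0 ≤ (1 - 2 * p) * Real.sqrt (1 - (1 - 2 * p) ^ 2 * (1 - g)) :=
        mul_nonneg hq0 (Real.sqrt_nonneg _)
      nlinarith [Real.sqrt_nonneg g]
    have hsg : 0 < Real.sqrt g := Real.sqrt_pos.mpr hg0
    have : (1 - 2 * p) * Real.sqrt (1 - (1 - 2 * p) ^ 2 * (1 - g)) / (2 * Real.sqrt g)
        ≤ 1 / 2 := by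
      rw [div_le_iff₀ (by positivity)]
      linarith
    linarith
  · have h1 : 0 ≤ (1 - 2 * p) * Real.sqrt (1 - (1 - 2 * p) ^ 2 * (1 - g)) /
        (2 * Real.sqrt g) := by positivity
    linarith
end

section
/- For the amplitude damping channel A_g with 0 ≤ g ≤ 1 and input ρ_z = diag((1+z)/2, (1-z)/2) with -1 ≤ z ≤ 1, the coherent information equals I_c(z) = h((1-g)(1-z)/2) - h(g(1-z)/2), where h is the binary entropy. -/
lemma binEnt_symm (x : ℝ) : binEnt (1 - x) = binEnt x := by
  unfold binEnt
  rw [sub_sub_cancel]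
  ring

lemma binEnt_abs (r : ℝ) : binEnt ((1 + |r|) / 2) = binEnt ((1 + r) / 2) := by
  rcases abs_cases r with ⟨h, _⟩ | ⟨h, _⟩
  · rw [h]
  · rw [h, show (1 + -r) / 2 = 1 - (1 + r) / 2 by ring, binEnt_symm]

/-- For the amplitude damping channel `A_g` with diagonal input
`ρ_z = diag((1+z)/2, (1-z)/2)`, the coherent information
`S(A_g(ρ_z)) - S(A_g^c(ρ_z))`, computed from the output Bloch vectors
`(0,0,(1-g)z+g)` and `(0,0,g-gz-1)` via `S = h((1+|r|)/2)`, equals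
`h((1-g)(1-z)/2) - h(g(1-z)/2)`. -/
theorem damping_coherent_info_diagonal (g z : ℝ)
    (hg : g ∈ Set.Icc (0 : ℝ) 1) (hz : z ∈ Set.Icc (-1 : ℝ) 1) :
    binEnt ((1 + |(1 - g) * z + g|) / 2) - binEnt ((1 + |g - g * z - 1|) / 2) =
      binEnt ((1 - g) * (1 - z) / 2) - binEnt (g * (1 - z) / 2) := by
  rw [binEnt_abs, binEnt_abs,
    show (1 + ((1 - g) * z + g)) / 2 = 1 - (1 - g) * (1 - z) / 2 by ring,
    show (1 + (g - g * z - 1)) / 2 = g * (1 - z) / 2 by ring,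
    binEnt_symm]
end
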